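/- Let μ > 0, β > 0, h > 0, and set ρ = exp(βh/μ). If a real number τ satisfies the identity (μ + τβ²)·(ρ + ρ⁻¹ − 2) = (βh/2)·(ρ − ρ⁻¹), then necessarily τ = (h/(2β))·(coth(Pe) − 1/Pe) with Pe = βh/(2μ). That is, the stabilization parameter yielding nodal exactness of the 1D linear-FE SUPG scheme is unique and equals the theoretical value τ̃₁. -/

import Mathlib

/-- The hyperbolic cotangent, `coth θ = cosh θ / sinh θ`. -/
noncomputable def coth (θ : ℝ) : ℝ := Real.cosh θ / Real.sinh θ

/-- Uniqueness of the nodally exact stabilization parameter: for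
μ, β, h > 0 and `ρ = exp(βh/μ)`, any real τ satisfying
`(μ + τβ²)(ρ + ρ⁻¹ − 2) = (βh/2)(ρ − ρ⁻¹)` must equal the theoretical value
`τ̃₁ = (h/(2β))·(coth Pe − 1/Pe)` with `Pe = βh/(2μ)`. -/
theorem stmt_8 (μ β h : ℝ) (hμ : 0 < μ) (hβ : 0 < β) (hh : 0 < h) (τ : ℝ)
    (hτ : (μ + τ * β ^ 2) * (Real.exp (β * h / μ) + (Real.exp (β * h / μ))⁻¹ - 2)
        = (β * h / 2) * (Real.exp (β * h / μ) - (Real.exp (β * h / μ))⁻¹)) :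
    τ = h / (2 * β) * (coth (β * h / (2 * μ)) - 1 / (β * h / (2 * μ))) := by
  set θ : ℝ := β * h / (2 * μ) with hθdef
  have hθ : 0 < θ := by positivity
  have hsum : β * h / μ = θ + θ := by rw [hθdef]; field_simp; ring
  set E : ℝ := Real.exp θ with hE
  have hE1 : (1:ℝ) < E := by
    rw [hE, show (1:ℝ) = Real.exp 0 from (Real.exp_zero).symm]
    exact Real.exp_lt_exp.mpr hθ
  have hE0 : (0:ℝ) < E := by linarith
  have hEinv : E⁻¹ < 1 := inv_lt_one_iff₀.mpr (Or.inr hE1)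
  have hEne0 : E ≠ 0 := ne_of_gt hE0
  have hdiffne : E - E⁻¹ ≠ 0 := by nlinarith
  have hexp : Real.exp (β * h / μ) = E * E := by rw [hsum, Real.exp_add]
  have hsinh : Real.sinh θ = (E - E⁻¹) / 2 := by
    rw [Real.sinh_eq, Real.exp_neg]
  have hcosh : Real.cosh θ = (E + E⁻¹) / 2 := by
    rw [Real.cosh_eq, Real.exp_neg]
  have hcoth : coth θ = (E * E + 1) / (E * E - 1) := by
    rw [coth, hsinh, hcosh]
    have hEEne : E * E - 1 ≠ 0 := by nlinarith
    field_simp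
  rw [hexp] at hτ
  have hEne : E * E - 1 ≠ 0 := by nlinarith
  have hEE0 : (0:ℝ) < E * E := by positivity
  have key : (μ + τ * β ^ 2) * (2 * (E * E - 1)) = (β * h) * (E * E + 1) := by
    apply mul_right_cancel₀ (mul_ne_zero hEne (ne_of_gt hEE0))
    have h1 : E * E + (E * E)⁻¹ - 2 = (E * E - 1) ^ 2 / (E * E) := by
      field_simp; ring
    have h2 : E * E - (E * E)⁻¹ = (E * E - 1) * (E * E + 1) / (E * E) := by
      field_simp; ring
    rw [h1, h2] at hτ
    field_simp at hτ
    linear_combination (E * E) * hτ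
  rw [hcoth]
  have h1θ : 1 / θ = 2 * μ / (β * h) := by
    rw [hθdef, one_div_div]
  rw [h1θ]
  field_simp
  ring_nf
  ring_nf at key
  have hE2 : (-1 + E ^ 2) ≠ 0 := by nlinarith
  have hk : τ * β ^ 2 * 2 + μ * 2 = (β * h * E ^ 2 + β * h) * (-1 + E ^ 2)⁻¹ := by
    rw [eq_mul_inv_iff_mul_eq₀ hE2]; linear_combination key
  linear_combination hk
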